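/- Let G and H be non-trivial graphs where there exist vertices u, v of G with N_G(u) ∪ N_G(v) = V(G) and H is not complete. Then tn(G ∘ H) ≤ 4. -/

import Mathlib

open SimpleGraph

/-- A walk `W` between `u` and `v` is a *tolled walk* if either `u = v` and `W` is trivial,
or `u` and `v` are adjacent and `W` is the single-edge walk, or `u ≠ v` are non-adjacent,
`W` has at least one interior vertex, `u` is adjacent exactly to the interior vertex
at position 1 and `v` exactly to the interior vertex at position `W.length - 1`. -/
def IsTolledWalk {V : Type*} (G : SimpleGraph V) {u v : V} (W : G.Walk u v) : Prop :=
  (u = v ∧ W.length = 0) ∨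
  (G.Adj u v ∧ W.support = [u, v]) ∨
  (¬ G.Adj u v ∧ u ≠ v ∧ 2 ≤ W.length ∧
    (∀ i, 0 < i → i < W.length → (G.Adj u (W.support.getD i u) ↔ i = 1)) ∧
    (∀ i, 0 < i → i < W.length → (G.Adj v (W.support.getD i u) ↔ i = W.length - 1)))

/-- The toll interval between `u` and `v`: vertices lying on some tolled walk. -/
def tollInterval {V : Type*} (G : SimpleGraph V) (u v : V) : Set V :=
  {x | ∃ W : G.Walk u v, IsTolledWalk G W ∧ x ∈ W.support}

/-- A toll set: the toll intervals between its pairs cover the vertex set. -/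
def IsTollSet {V : Type*} (G : SimpleGraph V) (S : Set V) : Prop :=
  ∀ x : V, ∃ u ∈ S, ∃ v ∈ S, x ∈ tollInterval G u v

/-- The toll number: minimum size of a toll set. -/
noncomputable def tollNumber {V : Type*} (G : SimpleGraph V) : ℕ :=
  sInf {n | ∃ S : Set V, S.Finite ∧ S.ncard = n ∧ IsTollSet G S}

/-- `v` is a cut vertex if deleting it disconnects the graph. -/
def IsCutVertex {V : Type*} (G : SimpleGraph V) (v : V) : Prop :=
  ¬ (G.induce {w | w ≠ v}).Preconnected

/-- The extreme vertices of `G` with respect to toll convexity. -/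
def extremeVertices {V : Type*} (G : SimpleGraph V) : Set V :=
  {s | ∀ x y : V, x ≠ s → y ≠ s → s ∉ tollInterval G x y}

/-- The lexicographic product of simple graphs. -/
def lexProd {V W : Type*} (G : SimpleGraph V) (H : SimpleGraph W) : SimpleGraph (V × W) where
  Adj a b := G.Adj a.1 b.1 ∨ (a.1 = b.1 ∧ H.Adj a.2 b.2)
  symm := by
    constructor
    rintro a b (h | ⟨h1, h2⟩)
    · exact Or.inl h.symm
    · exact Or.inr ⟨h1.symm, h2.symm⟩
  loopless := by
    constructor
    rintro a (h | ⟨_, h⟩)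
    · exact (G.ne_of_adj h) rfl
    · exact (H.ne_of_adj h) rfl

lemma mem_tollInterval_of_adj {V : Type*} (G : SimpleGraph V) {a b x : V}
    (hab : ¬ G.Adj a b) (hne : a ≠ b) (hax : G.Adj a x) (hbx : G.Adj b x) :
    x ∈ tollInterval G a b := by
  refine ⟨Walk.cons hax (Walk.cons hbx.symm Walk.nil), ?_, ?_⟩
  · refine Or.inr (Or.inr ⟨hab, hne, by simp, ?_, ?_⟩)
    · intro i h1 h2
      simp only [Walk.length_cons, Walk.length_nil] at h2
      interval_cases i
      simp [Walk.support, hax]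
    · intro i h1 h2
      simp only [Walk.length_cons, Walk.length_nil] at h2
      interval_cases i
      simp [Walk.support, hbx]
  · simp [Walk.support]

theorem stmt12 {V W : Type*} [Fintype V] [Fintype W] [Nontrivial V] [Nontrivial W]
    (G : SimpleGraph V) (H : SimpleGraph W)
    (hcov : ∃ u v : V, G.neighborSet u ∪ G.neighborSet v = Set.univ) (hH : H ≠ ⊤) :
    tollNumber (lexProd G H) ≤ 4 := by
  obtain ⟨u, v, hcov⟩ := hcov
  have huv : G.Adj v u := by
    have : u ∈ G.neighborSet u ∪ G.neighborSet v := hcov ▸ Set.mem_univ u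
    rcases this with h | h
    · exact absurd h (G.irrefl)
    · exact h
  have hH' : ∃ h1 h2 : W, h1 ≠ h2 ∧ ¬ H.Adj h1 h2 := by
    by_contra hc
    push_neg at hc
    apply hH
    ext a b
    exact ⟨fun hab => hab.ne, fun hne => hc a b hne⟩
  obtain ⟨h1, h2, hne12, hnadj⟩ := hH'
  set S : Set (V × W) := {(u, h1), (u, h2), (v, h1), (v, h2)} with hS
  have hts : IsTollSet (lexProd G H) S := by
    rintro ⟨g, h⟩
    have hg : g ∈ G.neighborSet u ∪ G.neighborSet v := hcov ▸ Set.mem_univ g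
    have key : ∀ w : V, G.Adj w g →
        (g, h) ∈ tollInterval (lexProd G H) (w, h1) (w, h2) := by
      intro w hw
      apply mem_tollInterval_of_adj
      · rintro (hc | ⟨-, hc⟩)
        · exact G.irrefl hc
        · exact hnadj hc
      · simp [hne12]
      · exact Or.inl hw
      · exact Or.inl hw
    rcases hg with hg | hg
    · exact ⟨(u, h1), by simp [hS], (u, h2), by simp [hS], key u hg⟩
    · exact ⟨(v, h1), by simp [hS], (v, h2), by simp [hS], key v hg⟩
  have hmem : S.ncard ∈ {n | ∃ T : Set (V × W), T.Finite ∧ T.ncard = n ∧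
      IsTollSet (lexProd G H) T} := ⟨S, S.toFinite, rfl, hts⟩
  have hle : S.ncard ≤ 4 := by
    calc S.ncard ≤ ({(u, h2), (v, h1), (v, h2)} : Set (V × W)).ncard + 1 :=
          Set.ncard_insert_le _ _
      _ ≤ (({(v, h1), (v, h2)} : Set (V × W)).ncard + 1) + 1 :=
          Nat.add_le_add_right (Set.ncard_insert_le _ _) 1
      _ ≤ ((({(v, h2)} : Set (V × W)).ncard + 1) + 1) + 1 :=
          Nat.add_le_add_right (Nat.add_le_add_right (Set.ncard_insert_le _ _) 1) 1
      _ ≤ 4 := by simp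
  exact le_trans (Nat.sInf_le hmem) hle
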